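/- arXiv:2602.10532 — 3 statements merged into one kernel-verified Lean document; each statement's English description precedes it below -/
import Mathlib

section
/- For any n ≥ 1, r < n, and c ∈ {1,...,r}, the ratio (n-r)_{r-c} / (n)_r of falling factorials is at most (c^c / c!)·(1/n^c), which in turn is at most (r^r / r!)·(1/n^c). -/
open Finset

lemma aux_fact_pow_le (n c : ℕ) (hcn : c ≤ n) :
    c.factorial * n ^ c ≤ c ^ c * n.descFactorial c := by
  have h1 : c.factorial = ∏ i ∈ range c, (c - i) := by
    rw [← Nat.descFactorial_self, Nat.descFactorial_eq_prod_range]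
  have h2 : n.descFactorial c = ∏ i ∈ range c, (n - i) := Nat.descFactorial_eq_prod_range n c
  have h3 : n ^ c = ∏ _i ∈ range c, n := by simp
  have h4 : c ^ c = ∏ _i ∈ range c, c := by simp
  rw [h1, h2, h3, h4, ← Finset.prod_mul_distrib, ← Finset.prod_mul_distrib]
  apply Finset.prod_le_prod
  · intro i _; positivity
  · intro i hi
    simp only [Finset.mem_range] at hi
    rw [Nat.sub_mul, Nat.mul_sub]
    apply Nat.sub_le_sub_left
    calc c * i ≤ n * i := Nat.mul_le_mul_right i hcn
      _ = i * n := Nat.mul_comm n i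

lemma aux_mono (c r : ℕ) (hcr : c ≤ r) :
    c ^ c * r.factorial ≤ r ^ r * c.factorial := by
  induction r with
  | zero => interval_cases c <;> simp
  | succ k ih =>
    rcases Nat.lt_or_ge c (k+1) with h | h
    · have hck : c ≤ k := Nat.lt_succ_iff.mp h
      have ihk := ih hck
      calc c ^ c * (k+1).factorial = (k+1) * (c ^ c * k.factorial) := by
            rw [Nat.factorial_succ]; ring
        _ ≤ (k+1) * (k ^ k * c.factorial) := Nat.mul_le_mul_left _ ihk
        _ ≤ (k+1) * ((k+1) ^ k * c.factorial) :=
            Nat.mul_le_mul_left _ (Nat.mul_le_mul_right _ (Nat.pow_le_pow_left (Nat.le_succ k) k))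
        _ = (k+1) ^ (k+1) * c.factorial := by rw [pow_succ]; ring
    · have : c = k + 1 := le_antisymm hcr h
      subst this; exact le_rfl

theorem falling_factorial_ratio_bound (n r c : ℕ) (hn : 1 ≤ n) (hr : r < n)
    (hc1 : 1 ≤ c) (hcr : c ≤ r) :
    ((n - r).descFactorial (r - c) : ℝ) / (n.descFactorial r) ≤
        ((c : ℝ) ^ c / c.factorial) * (1 / (n : ℝ) ^ c) ∧
    ((c : ℝ) ^ c / c.factorial) * (1 / (n : ℝ) ^ c) ≤
        ((r : ℝ) ^ r / r.factorial) * (1 / (n : ℝ) ^ c) := by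
  have hcn : c ≤ n := le_of_lt (lt_of_le_of_lt hcr hr)
  have hsplit : (n - c).descFactorial (r - c) * n.descFactorial c = n.descFactorial r :=
    Nat.descFactorial_mul_descFactorial hcr
  have hBpos : 0 < (n.descFactorial c : ℝ) := by
    have : 0 < n.descFactorial c := by
      rw [Nat.pos_iff_ne_zero]
      simp [Nat.descFactorial_eq_zero_iff_lt, not_lt, hcn]
    exact_mod_cast this
  have hDpos : 0 < ((n - c).descFactorial (r - c) : ℝ) := by
    have : 0 < (n - c).descFactorial (r - c) := by
      rw [Nat.pos_iff_ne_zero]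
      simp only [ne_eq, Nat.descFactorial_eq_zero_iff_lt, not_lt]
      omega
    exact_mod_cast this
  have hA : ((n - r).descFactorial (r - c) : ℝ) ≤ ((n - c).descFactorial (r - c) : ℝ) := by
    exact_mod_cast Nat.descFactorial_le (r - c) (Nat.sub_le_sub_left hcr n)
  have hnpow : (0:ℝ) < (n:ℝ) ^ c := by positivity
  have hcf : (0:ℝ) < (c.factorial : ℝ) := by exact_mod_cast c.factorial_pos
  have hrf : (0:ℝ) < (r.factorial : ℝ) := by exact_mod_cast r.factorial_pos
  constructor
  · have step1 : ((n - r).descFactorial (r - c) : ℝ) / (n.descFactorial r)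
        ≤ 1 / (n.descFactorial c : ℝ) := by
      rw [← hsplit]
      push_cast
      rw [div_le_div_iff₀ (by positivity) hBpos]
      calc ((n - r).descFactorial (r - c) : ℝ) * (n.descFactorial c : ℝ)
          ≤ ((n - c).descFactorial (r - c) : ℝ) * (n.descFactorial c : ℝ) :=
            mul_le_mul_of_nonneg_right hA hBpos.le
        _ = 1 * (((n - c).descFactorial (r - c) : ℝ) * (n.descFactorial c : ℝ)) := by ring
    refine step1.trans ?_
    rw [mul_one_div, div_div, one_div, inv_eq_one_div,
      div_le_div_iff₀ hBpos (by positivity)]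
    calc (1:ℝ) * ((c.factorial : ℝ) * (n:ℝ) ^ c) = (c.factorial : ℝ) * (n:ℝ) ^ c := by ring
      _ ≤ (c:ℝ) ^ c * (n.descFactorial c : ℝ) := by exact_mod_cast aux_fact_pow_le n c hcn
  · apply mul_le_mul_of_nonneg_right _ (by positivity)
    rw [div_le_div_iff₀ hcf hrf]
    exact_mod_cast aux_mono c r hcr
end

section
/- Fix p ∈ [1,2) and β > 0, and define φ_{p,β}(u) := |u|^p · tanh(β·|u|^{2-p}). There exists a constant C_p > 0 depending only on p such that |φ''_{p,β}(u)| ≤ C_p·β for all u ∈ ℝ. -/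
open Real Filter

lemma SPB_hasDerivAt_tanh (x : ℝ) : HasDerivAt Real.tanh (1 / Real.cosh x ^ 2) x := by
  have h : HasDerivAt (fun y => Real.sinh y / Real.cosh y)
      ((Real.cosh x * Real.cosh x - Real.sinh x * Real.sinh x) / Real.cosh x ^ 2) x :=
    (Real.hasDerivAt_sinh x).div (Real.hasDerivAt_cosh x) (Real.cosh_pos x).ne'
  have h2 : (Real.cosh x * Real.cosh x - Real.sinh x * Real.sinh x) / Real.cosh x ^ 2
      = 1 / Real.cosh x ^ 2 := by
    have h3 : Real.cosh x * Real.cosh x - Real.sinh x * Real.sinh x = 1 := by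
      nlinarith [Real.cosh_sq_sub_sinh_sq x]
    rw [h3]
  rw [← h2]
  exact h.congr_of_eventuallyEq (Filter.Eventually.of_forall fun y => Real.tanh_eq_sinh_div_cosh y)

lemma SPB_tanh_nonneg {x : ℝ} (hx : 0 ≤ x) : 0 ≤ Real.tanh x := by
  rw [Real.tanh_eq_sinh_div_cosh]
  exact div_nonneg (by rwa [Real.sinh_nonneg_iff]) (Real.cosh_pos x).le

lemma SPB_tanh_le_one (x : ℝ) : Real.tanh x ≤ 1 := by
  rw [Real.tanh_eq_sinh_div_cosh, div_le_one (Real.cosh_pos x)]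
  nlinarith [Real.cosh_sub_sinh x, Real.exp_pos (-x)]

lemma SPB_sinh_le_mul_cosh {x : ℝ} (hx : 0 ≤ x) : Real.sinh x ≤ x * Real.cosh x := by
  have key : ∀ y : ℝ, HasDerivAt (fun z => z * Real.cosh z - Real.sinh z) (y * Real.sinh y) y := by
    intro y
    have h := ((hasDerivAt_id y).mul (Real.hasDerivAt_cosh y)).sub (Real.hasDerivAt_sinh y)
    exact h.congr_deriv (by simp only [id]; ring)
  have mono : MonotoneOn (fun z : ℝ => z * Real.cosh z - Real.sinh z) (Set.Ici 0) := by
    apply monotoneOn_of_deriv_nonneg (convex_Ici 0)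
    · exact (Continuous.continuousOn (by continuity))
    · intro y hy
      exact (key y).differentiableAt.differentiableWithinAt
    · intro y hy
      rw [(key y).deriv]
      rw [interior_Ici] at hy
      exact mul_nonneg (le_of_lt hy) (by rw [Real.sinh_nonneg_iff]; exact le_of_lt hy)
  have := mono Set.self_mem_Ici hx hx
  simp at this
  linarith

lemma SPB_tanh_le_self {x : ℝ} (hx : 0 ≤ x) : Real.tanh x ≤ x := by
  rw [Real.tanh_eq_sinh_div_cosh, div_le_iff₀ (Real.cosh_pos x)]
  exact SPB_sinh_le_mul_cosh hx

lemma SPB_le_cosh_sq {x : ℝ} (hx : 0 ≤ x) : x ≤ Real.cosh x ^ 2 := by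
  rcases le_total x 1 with h | h
  · nlinarith [Real.one_le_cosh x]
  · have hs : x < Real.sinh x := (Real.self_lt_sinh_iff).mpr (by linarith)
    nlinarith [Real.cosh_sq x]

noncomputable def SPB_A (p β v : ℝ) : ℝ :=
  p * v ^ (p - 1) * Real.tanh (β * v ^ (2 - p)) +
    β * (2 - p) * v / Real.cosh (β * v ^ (2 - p)) ^ 2

noncomputable def SPB_D (p β v : ℝ) : ℝ :=
  p * (p - 1) * v ^ (p - 2) * Real.tanh (β * v ^ (2 - p)) +
    β * (2 - p) * (p + 1) / Real.cosh (β * v ^ (2 - p)) ^ 2 -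
    2 * β ^ 2 * (2 - p) ^ 2 * v ^ (2 - p) * Real.tanh (β * v ^ (2 - p)) /
      Real.cosh (β * v ^ (2 - p)) ^ 2

noncomputable def SPB_g (p β u : ℝ) : ℝ := Real.sign u * SPB_A p β |u|

lemma SPB_hasDerivAt_F (p β : ℝ) {v : ℝ} (hv : 0 < v) :
    HasDerivAt (fun w : ℝ => w ^ p * Real.tanh (β * w ^ (2 - p))) (SPB_A p β v) v := by
  have ht : HasDerivAt (fun w : ℝ => β * w ^ (2 - p)) (β * ((2 - p) * v ^ (2 - p - 1))) v :=
    (Real.hasDerivAt_rpow_const (Or.inl hv.ne')).const_mul β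
  have htanh : HasDerivAt (fun w : ℝ => Real.tanh (β * w ^ (2 - p)))
      (1 / Real.cosh (β * v ^ (2 - p)) ^ 2 * (β * ((2 - p) * v ^ (2 - p - 1)))) v :=
    (SPB_hasDerivAt_tanh _).comp v ht
  have hpow : HasDerivAt (fun w : ℝ => w ^ p) (p * v ^ (p - 1)) v :=
    Real.hasDerivAt_rpow_const (Or.inl hv.ne')
  have h := hpow.mul htanh
  refine h.congr_deriv (Eq.symm ?_)
  have hc := (Real.cosh_pos (β * v ^ (2 - p))).ne'
  have hvv : v ^ p * v ^ (2 - p - 1) = v := by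
    rw [← Real.rpow_add hv, show p + (2 - p - 1) = 1 by ring, Real.rpow_one]
  unfold SPB_A
  field_simp
  linear_combination (β * (p - 2)) * hvv

lemma SPB_hasDerivAt_A (p β : ℝ) {v : ℝ} (hv : 0 < v) :
    HasDerivAt (SPB_A p β) (SPB_D p β v) v := by
  have hy := Real.rpow_pos_of_pos hv (2 - p)
  have hc := (Real.cosh_pos (β * v ^ (2 - p))).ne'
  have ht : HasDerivAt (fun w : ℝ => β * w ^ (2 - p)) (β * ((2 - p) * v ^ (2 - p - 1))) v :=
    (Real.hasDerivAt_rpow_const (Or.inl hv.ne')).const_mul β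
  have htanh : HasDerivAt (fun w : ℝ => Real.tanh (β * w ^ (2 - p)))
      (1 / Real.cosh (β * v ^ (2 - p)) ^ 2 * (β * ((2 - p) * v ^ (2 - p - 1)))) v :=
    (SPB_hasDerivAt_tanh _).comp v ht
  have hpow : HasDerivAt (fun w : ℝ => p * w ^ (p - 1)) (p * ((p - 1) * v ^ (p - 1 - 1))) v :=
    (Real.hasDerivAt_rpow_const (Or.inl hv.ne')).const_mul p
  have hterm1 := hpow.mul htanh
  have hcosh : HasDerivAt (fun w : ℝ => Real.cosh (β * w ^ (2 - p)))
      (Real.sinh (β * v ^ (2 - p)) * (β * ((2 - p) * v ^ (2 - p - 1)))) v :=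
    (Real.hasDerivAt_cosh _).comp v ht
  have hcosh2 := hcosh.pow 2
  have hcsq : Real.cosh (β * v ^ (2 - p)) ^ 2 ≠ 0 := pow_ne_zero 2 hc
  have hdiv := (hasDerivAt_id v).div hcosh2 hcsq
  have hterm2 := hdiv.const_mul (β * (2 - p))
  have hsum := hterm1.add hterm2
  have heq : SPB_A p β = fun w : ℝ => p * w ^ (p - 1) * Real.tanh (β * w ^ (2 - p)) +
      β * (2 - p) * (id w / Real.cosh (β * w ^ (2 - p)) ^ 2) := by
    funext w; unfold SPB_A; simp [id]; ring
  rw [heq]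
  refine hsum.congr_deriv (Eq.symm ?_)
  -- now prove the value equality
  have E1 : v ^ (p - 1) = v / v ^ (2 - p) := by
    rw [eq_div_iff hy.ne', ← Real.rpow_add hv, show p - 1 + (2 - p) = 1 by ring, Real.rpow_one]
  have E2 : v ^ (2 - p - 1) = v ^ (2 - p) / v := by
    rw [eq_div_iff hv.ne']
    nth_rewrite 2 [← Real.rpow_one v]
    rw [← Real.rpow_add hv, show 2 - p - 1 + 1 = 2 - p by ring]
  have E3 : v ^ (p - 1 - 1) = 1 / v ^ (2 - p) := by
    rw [eq_div_iff hy.ne', ← Real.rpow_add hv, show p - 1 - 1 + (2 - p) = 0 by ring, Real.rpow_zero]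
  have E4 : v ^ (p - 2) = 1 / v ^ (2 - p) := by
    rw [eq_div_iff hy.ne', ← Real.rpow_add hv, show p - 2 + (2 - p) = 0 by ring, Real.rpow_zero]
  have Es : Real.sinh (β * v ^ (2 - p)) =
      Real.tanh (β * v ^ (2 - p)) * Real.cosh (β * v ^ (2 - p)) := by
    rw [Real.tanh_eq_sinh_div_cosh, div_mul_cancel₀ _ hc]
  unfold SPB_D
  rw [Es, E1, E2, E3, E4]
  simp only [id, Pi.pow_apply]
  field_simp
  ring

set_option maxHeartbeats 1000000 in
lemma SPB_D_bound {p β : ℝ} (hp1 : 1 ≤ p) (hp2 : p < 2) (hβ : 0 < β) {v : ℝ} (hv : 0 < v) :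
    |SPB_D p β v| ≤ 7 * β := by
  have hy := Real.rpow_pos_of_pos hv (2 - p)
  set t : ℝ := β * v ^ (2 - p) with hts
  have ht : 0 < t := mul_pos hβ hy
  have hc1 := Real.one_le_cosh t
  have hc0 : (0:ℝ) < Real.cosh t ^ 2 := by positivity
  have hT0 := SPB_tanh_nonneg ht.le
  have hT1 := SPB_tanh_le_one t
  have hTt := SPB_tanh_le_self ht.le
  have htc := SPB_le_cosh_sq ht.le
  have E4 : v ^ (p - 2) = 1 / v ^ (2 - p) := by
    rw [eq_div_iff hy.ne', ← Real.rpow_add hv, show p - 2 + (2 - p) = 0 by ring, Real.rpow_zero]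
  unfold SPB_D
  rw [← hts, E4]
  -- term bounds
  have hb1 : 0 ≤ p * (p - 1) * (1 / v ^ (2 - p)) * Real.tanh t :=
    mul_nonneg (mul_nonneg (mul_nonneg (by linarith) (by linarith)) (by positivity)) hT0
  have hb1' : p * (p - 1) * (1 / v ^ (2 - p)) * Real.tanh t ≤ 2 * β := by
    have h1 : (1 / v ^ (2 - p)) * Real.tanh t ≤ β := by
      rw [div_mul_eq_mul_div, one_mul, div_le_iff₀ hy]
      calc Real.tanh t ≤ t := hTt
        _ = β * v ^ (2 - p) := rfl
    have hpp : p * (p - 1) ≤ 2 := by nlinarith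
    calc p * (p - 1) * (1 / v ^ (2 - p)) * Real.tanh t
        = p * (p - 1) * ((1 / v ^ (2 - p)) * Real.tanh t) := by ring
      _ ≤ p * (p - 1) * β := by
          apply mul_le_mul_of_nonneg_left h1 (by nlinarith : (0:ℝ) ≤ p * (p - 1))
      _ ≤ 2 * β := by nlinarith
  have hb2 : 0 ≤ β * (2 - p) * (p + 1) / Real.cosh t ^ 2 :=
    div_nonneg (mul_nonneg (mul_nonneg hβ.le (by linarith)) (by linarith)) hc0.le
  have hb2' : β * (2 - p) * (p + 1) / Real.cosh t ^ 2 ≤ 3 * β := by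
    rw [div_le_iff₀ hc0]
    have h23 : (2 - p) * (p + 1) ≤ 3 := by nlinarith
    calc β * (2 - p) * (p + 1) = β * ((2 - p) * (p + 1)) := by ring
      _ ≤ β * 3 := by nlinarith
      _ ≤ 3 * β * Real.cosh t ^ 2 := by nlinarith [mul_le_mul_of_nonneg_left (by nlinarith : (1:ℝ) ≤ Real.cosh t ^ 2) (by linarith : (0:ℝ) ≤ 3 * β)]
  have hb3 : 0 ≤ 2 * β ^ 2 * (2 - p) ^ 2 * v ^ (2 - p) * Real.tanh t / Real.cosh t ^ 2 := by
    positivity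
  have hb3' : 2 * β ^ 2 * (2 - p) ^ 2 * v ^ (2 - p) * Real.tanh t / Real.cosh t ^ 2 ≤ 2 * β := by
    rw [div_le_iff₀ hc0]
    have hbv : β * v ^ (2 - p) ≤ Real.cosh t ^ 2 := htc
    have h2p : (2 - p) ^ 2 ≤ 1 := by nlinarith
    calc 2 * β ^ 2 * (2 - p) ^ 2 * v ^ (2 - p) * Real.tanh t
        = 2 * β * (2 - p) ^ 2 * Real.tanh t * (β * v ^ (2 - p)) := by ring
      _ ≤ 2 * β * 1 * 1 * Real.cosh t ^ 2 := by
          have hab : (2 - p) ^ 2 * Real.tanh t * (β * v ^ (2 - p)) ≤ Real.cosh t ^ 2 := by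
            calc (2 - p) ^ 2 * Real.tanh t * (β * v ^ (2 - p))
                ≤ 1 * (β * v ^ (2 - p)) := by
                  apply mul_le_mul_of_nonneg_right _ (mul_pos hβ hy).le
                  nlinarith [mul_nonneg (sq_nonneg (2 - p)) (sub_nonneg.mpr hT1)]
              _ ≤ Real.cosh t ^ 2 := by rw [one_mul]; exact htc
          nlinarith [mul_le_mul_of_nonneg_left hab (by positivity : (0:ℝ) ≤ 2 * β)]
      _ = 2 * β * Real.cosh t ^ 2 := by ring
  rw [abs_le]
  constructor <;> linarith

lemma SPB_hasDerivAt_f_zero (p β : ℝ) (hp1 : 1 ≤ p) (hp2 : p < 2) (hβ : 0 < β) :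
    HasDerivAt (fun v : ℝ => |v| ^ p * Real.tanh (β * |v| ^ (2 - p))) 0 0 := by
  have hp0 : p ≠ 0 := by linarith
  rw [hasDerivAt_iff_tendsto_slope]
  apply squeeze_zero_norm' (a := fun h : ℝ => β * |h|)
  · filter_upwards [self_mem_nhdsWithin] with h (hh : h ≠ 0)
    have hh0 : 0 < |h| := abs_pos.mpr hh
    have ht : 0 ≤ β * |h| ^ (2 - p) := by positivity
    rw [slope_def_field]
    simp only [abs_zero, Real.zero_rpow hp0, zero_mul, sub_zero]
    rw [Real.norm_eq_abs, abs_div, abs_mul, abs_of_nonneg (Real.rpow_nonneg (abs_nonneg h) p),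
      abs_of_nonneg (SPB_tanh_nonneg ht), div_le_iff₀ (abs_pos.mpr hh)]
    calc |h| ^ p * Real.tanh (β * |h| ^ (2 - p)) ≤ |h| ^ p * (β * |h| ^ (2 - p)) :=
          mul_le_mul_of_nonneg_left (SPB_tanh_le_self ht) (Real.rpow_nonneg (abs_nonneg h) p)
      _ = β * (|h| ^ p * |h| ^ (2 - p)) := by ring
      _ = β * |h| * |h| := by
          rw [← Real.rpow_add hh0, show p + (2 - p) = 2 by ring]
          rw [show (2:ℝ) = ((2:ℕ):ℝ) by norm_num, Real.rpow_natCast]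
          ring
  · have : Filter.Tendsto (fun h : ℝ => β * |h|) (nhds 0) (nhds (β * |0|)) :=
      (continuous_const.mul continuous_abs).tendsto 0
    simpa using this.mono_left nhdsWithin_le_nhds

lemma SPB_hasDerivAt_f_pos (p β : ℝ) {u : ℝ} (hu : 0 < u) :
    HasDerivAt (fun v : ℝ => |v| ^ p * Real.tanh (β * |v| ^ (2 - p))) (SPB_A p β u) u := by
  have hF := SPB_hasDerivAt_F p β hu
  apply hF.congr_of_eventuallyEq
  filter_upwards [Ioi_mem_nhds hu] with w (hw : 0 < w)
  rw [abs_of_pos hw]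

lemma SPB_hasDerivAt_f_neg (p β : ℝ) {u : ℝ} (hu : u < 0) :
    HasDerivAt (fun v : ℝ => |v| ^ p * Real.tanh (β * |v| ^ (2 - p))) (-SPB_A p β (-u)) u := by
  have hF := SPB_hasDerivAt_F p β (v := -u) (by linarith)
  have hneg : HasDerivAt (fun w : ℝ => -w) (-1 : ℝ) u := (hasDerivAt_id u).neg
  have hc := hF.comp u hneg
  have hc' : HasDerivAt (fun w : ℝ => (-w) ^ p * Real.tanh (β * (-w) ^ (2 - p)))
      (-SPB_A p β (-u)) u := by
    refine hc.congr_deriv (Eq.symm ?_)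
    · ring
  apply hc'.congr_of_eventuallyEq
  filter_upwards [Iio_mem_nhds hu] with w (hw : w < 0)
  rw [abs_of_neg hw]

lemma SPB_deriv_f (p β : ℝ) (hp1 : 1 ≤ p) (hp2 : p < 2) (hβ : 0 < β) :
    deriv (fun v : ℝ => |v| ^ p * Real.tanh (β * |v| ^ (2 - p))) = SPB_g p β := by
  funext u
  rcases lt_trichotomy u 0 with hu | hu | hu
  · rw [(SPB_hasDerivAt_f_neg p β hu).deriv]
    unfold SPB_g
    rw [Real.sign_of_neg hu, abs_of_neg hu]; ring
  · subst hu
    rw [(SPB_hasDerivAt_f_zero p β hp1 hp2 hβ).deriv]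
    unfold SPB_g
    rw [Real.sign_zero]; ring
  · rw [(SPB_hasDerivAt_f_pos p β hu).deriv]
    unfold SPB_g
    rw [Real.sign_of_pos hu, abs_of_pos hu]; ring

lemma SPB_hasDerivAt_g_zero (p β : ℝ) (hp1 : 1 ≤ p) (hp2 : p < 2) (hβ : 0 < β) :
    HasDerivAt (SPB_g p β) (2 * β) 0 := by
  have h2p : (0:ℝ) < 2 - p := by linarith
  rw [hasDerivAt_iff_tendsto_slope]
  -- the limit of tanh s / s as s → 0
  have htanh0 : Filter.Tendsto (fun s : ℝ => Real.tanh s / s) (nhdsWithin 0 {0}ᶜ) (nhds 1) := by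
    have h := SPB_hasDerivAt_tanh 0
    rw [hasDerivAt_iff_tendsto_slope] at h
    have : (1:ℝ) / Real.cosh 0 ^ 2 = 1 := by simp [Real.cosh_zero]
    rw [this] at h
    refine h.congr' ?_
    filter_upwards [self_mem_nhdsWithin] with s _
    rw [slope_def_field, Real.tanh_zero, sub_zero, sub_zero]
  -- tt h := β * |h| ^ (2 - p) tends to 0 within {≠ 0}
  have htt0 : Filter.Tendsto (fun h : ℝ => β * |h| ^ (2 - p)) (nhdsWithin 0 {0}ᶜ) (nhds 0) := by
    have hca : ContinuousAt (fun h : ℝ => β * |h| ^ (2 - p)) 0 := by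
      apply ContinuousAt.mul continuousAt_const
      exact (Real.continuousAt_rpow_const _ _ (Or.inr h2p.le)).comp continuous_abs.continuousAt
    have := hca.tendsto
    simp only [abs_zero, Real.zero_rpow (by linarith : (2:ℝ) - p ≠ 0), mul_zero] at this
    exact this.mono_left nhdsWithin_le_nhds
  have htt : Filter.Tendsto (fun h : ℝ => β * |h| ^ (2 - p)) (nhdsWithin 0 {0}ᶜ)
      (nhdsWithin 0 {0}ᶜ) := by
    rw [tendsto_nhdsWithin_iff]
    refine ⟨htt0, ?_⟩
    filter_upwards [self_mem_nhdsWithin] with h (hh : h ≠ 0)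
    exact (mul_pos hβ (Real.rpow_pos_of_pos (abs_pos.mpr hh) _)).ne'
  have limit1 : Filter.Tendsto
      (fun h : ℝ => Real.tanh (β * |h| ^ (2 - p)) / (β * |h| ^ (2 - p)))
      (nhdsWithin 0 {0}ᶜ) (nhds 1) := htanh0.comp htt
  have limit2 : Filter.Tendsto (fun h : ℝ => 1 / Real.cosh (β * |h| ^ (2 - p)) ^ 2)
      (nhdsWithin 0 {0}ᶜ) (nhds 1) := by
    have hcos : Filter.Tendsto (fun h : ℝ => Real.cosh (β * |h| ^ (2 - p)) ^ 2)
        (nhdsWithin 0 {0}ᶜ) (nhds 1) := by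
      have := ((Real.continuous_cosh.tendsto 0).comp htt0).pow 2
      simpa [Real.cosh_zero] using this
    simpa using hcos.inv₀ one_ne_zero
  have total := (limit1.const_mul (p * β)).add (limit2.const_mul (β * (2 - p)))
  have hval : p * β * 1 + β * (2 - p) * 1 = 2 * β := by ring
  rw [hval] at total
  refine total.congr' ?_
  filter_upwards [self_mem_nhdsWithin] with h (hh : h ≠ 0)
  have hh0 : 0 < |h| := abs_pos.mpr hh
  have hy : 0 < |h| ^ (2 - p) := Real.rpow_pos_of_pos hh0 _
  have hcsq := (Real.cosh_pos (β * |h| ^ (2 - p))).ne'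
  have aux : ∀ w : ℝ, 0 < w →
      p * β * (Real.tanh (β * w ^ (2 - p)) / (β * w ^ (2 - p))) +
        β * (2 - p) * (1 / Real.cosh (β * w ^ (2 - p)) ^ 2) =
      (p * w ^ (p - 1) * Real.tanh (β * w ^ (2 - p)) +
        β * (2 - p) * w / Real.cosh (β * w ^ (2 - p)) ^ 2) / w := by
    intro w hw
    have hyw := Real.rpow_pos_of_pos hw (2 - p)
    have hcw := (Real.cosh_pos (β * w ^ (2 - p))).ne'
    have E1 : w ^ (p - 1) = w / w ^ (2 - p) := by
      rw [eq_div_iff hyw.ne', ← Real.rpow_add hw, show p - 1 + (2 - p) = 1 by ring,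
        Real.rpow_one]
    rw [E1]; field_simp
  rw [slope_def_field]
  unfold SPB_g SPB_A
  simp only [Real.sign_zero, zero_mul, sub_zero]
  rcases hh.lt_or_gt with hneg | hpos
  · rw [abs_of_neg hneg, Real.sign_of_neg hneg, aux (-h) (by linarith)]
    field_simp
  · rw [abs_of_pos hpos, Real.sign_of_pos hpos, aux h hpos, one_mul]

lemma SPB_hasDerivAt_g_pos (p β : ℝ) {u : ℝ} (hu : 0 < u) :
    HasDerivAt (SPB_g p β) (SPB_D p β u) u := by
  apply (SPB_hasDerivAt_A p β hu).congr_of_eventuallyEq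
  filter_upwards [Ioi_mem_nhds hu] with w (hw : 0 < w)
  unfold SPB_g
  rw [Real.sign_of_pos hw, abs_of_pos hw, one_mul]

lemma SPB_hasDerivAt_g_neg (p β : ℝ) {u : ℝ} (hu : u < 0) :
    HasDerivAt (SPB_g p β) (SPB_D p β (-u)) u := by
  have hA := SPB_hasDerivAt_A p β (v := -u) (by linarith)
  have hneg : HasDerivAt (fun w : ℝ => -w) (-1 : ℝ) u := (hasDerivAt_id u).neg
  have hc := (hA.comp u hneg).neg
  have hc' : HasDerivAt (fun w : ℝ => -SPB_A p β (-w)) (SPB_D p β (-u)) u := by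
    refine hc.congr_deriv (Eq.symm ?_)
    ring
  apply hc'.congr_of_eventuallyEq
  filter_upwards [Iio_mem_nhds hu] with w (hw : w < 0)
  unfold SPB_g
  rw [Real.sign_of_neg hw, abs_of_neg hw]
  ring

theorem smoothed_power_second_deriv_bound (p : ℝ) (hp1 : 1 ≤ p) (hp2 : p < 2) :
    ∃ C : ℝ, 0 < C ∧ ∀ β : ℝ, 0 < β → ∀ u : ℝ,
      |deriv (deriv (fun v : ℝ => |v| ^ p * Real.tanh (β * |v| ^ (2 - p)))) u| ≤
        C * β := by
  refine ⟨7, by norm_num, fun β hβ u => ?_⟩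
  rw [SPB_deriv_f p β hp1 hp2 hβ]
  rcases lt_trichotomy u 0 with hu | hu | hu
  · rw [(SPB_hasDerivAt_g_neg p β hu).deriv]
    exact SPB_D_bound hp1 hp2 hβ (by linarith)
  · subst hu
    rw [(SPB_hasDerivAt_g_zero p β hp1 hp2 hβ).deriv]
    rw [abs_of_nonneg (by linarith)]
    linarith
  · rw [(SPB_hasDerivAt_g_pos p β hu).deriv]
    exact SPB_D_bound hp1 hp2 hβ hu
end

section
/- Let U be a nonnegative random variable, let p ∈ [1,2), and suppose there exist constants δ, H, c > 0 such that U admits a Lebesgue density f_U on (0,c) satisfying f_U(t) ≤ H·t^{δ-1} for all t ∈ (0,c). Then there exists a constant K > 0 (depending on p, δ, H, c) such that for all sufficiently large β > 0, E[U^p·(1 - tanh(β·U^{2-p}))] ≤ K·β^{-(p+δ)/(2-p)}. -/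
open MeasureTheory Real Set
open scoped ENNReal


lemma one_sub_tanh_eq (x : ℝ) : 1 - Real.tanh x = Real.exp (-x) / Real.cosh x := by
  rw [Real.tanh_eq_sinh_div_cosh, ← Real.cosh_sub_sinh]
  field_simp [(Real.cosh_pos (x := x)).ne']

lemma one_sub_tanh_nonneg (x : ℝ) : 0 ≤ 1 - Real.tanh x := by
  rw [one_sub_tanh_eq]
  positivity

lemma one_sub_tanh_le_two (x : ℝ) : 1 - Real.tanh x ≤ 2 := by
  rw [one_sub_tanh_eq]
  have h1 : Real.exp (-x) / 2 ≤ Real.cosh x := by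
    rw [Real.cosh_eq]
    have := Real.exp_pos x
    linarith
  calc Real.exp (-x) / Real.cosh x ≤ Real.exp (-x) / (Real.exp (-x) / 2) :=
        div_le_div_of_nonneg_left (Real.exp_pos _).le (by positivity) h1
    _ = 2 := by field_simp
    _ ≤ 2 := le_rfl

lemma one_sub_tanh_le (x : ℝ) : 1 - Real.tanh x ≤ 2 * Real.exp (-(2 * x)) := by
  rw [one_sub_tanh_eq]
  have h1 : Real.exp x / 2 ≤ Real.cosh x := by
    rw [Real.cosh_eq]
    have := Real.exp_pos (-x)
    linarith
  have h2 : Real.exp (-x) / Real.cosh x ≤ Real.exp (-x) / (Real.exp x / 2) :=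
    div_le_div_of_nonneg_left (Real.exp_pos _).le (by positivity) h1
  refine h2.trans_eq ?_
  have h3 : Real.exp (-(2*x)) * Real.exp x = Real.exp (-x) := by
    rw [← Real.exp_add]; ring_nf
  rw [div_div_eq_mul_div, div_eq_iff (Real.exp_pos x).ne']
  nlinarith [Real.exp_pos x]

/-- polynomial bound on exp decay -/
lemma exp_neg_le (q : ℝ) (hq : 0 ≤ q) {y : ℝ} (hy : 0 < y) :
    Real.exp (-y) ≤ ((Nat.factorial (Nat.ceil q) : ℝ) + 1) * y ^ (-q) := by
  set C : ℝ := ((Nat.factorial (Nat.ceil q) : ℝ) + 1) with hC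
  have hC1 : (1:ℝ) ≤ C := by
    have : (1:ℝ) ≤ (Nat.factorial (Nat.ceil q) : ℝ) := by
      exact_mod_cast Nat.one_le_iff_ne_zero.2 (Nat.factorial_ne_zero _)
    simp only [hC]; linarith
  have key : y ^ q ≤ C * Real.exp y := by
    rcases le_total y 1 with h1 | h1
    · calc y ^ q ≤ 1 := Real.rpow_le_one hy.le h1 hq
        _ ≤ C * Real.exp y := by
          nlinarith [Real.one_le_exp hy.le]
    · have h2 : y ^ q ≤ y ^ (Nat.ceil q : ℝ) :=
        Real.rpow_le_rpow_of_exponent_le h1 (Nat.le_ceil q)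
      rw [Real.rpow_natCast] at h2
      refine h2.trans ?_
      have h3 : y ^ (Nat.ceil q) / (Nat.factorial (Nat.ceil q) : ℝ) ≤ Real.exp y := by
        calc y ^ (Nat.ceil q) / (Nat.factorial (Nat.ceil q) : ℝ)
            ≤ ∑ i ∈ Finset.range (Nat.ceil q + 1), y ^ i / (Nat.factorial i : ℝ) :=
              Finset.single_le_sum (f := fun i => y ^ i / (Nat.factorial i : ℝ))
                (fun i _ => by positivity) (Finset.self_mem_range_succ _)
          _ ≤ Real.exp y := Real.sum_le_exp_of_nonneg (by linarith) _
      have hfac : (0:ℝ) < (Nat.factorial (Nat.ceil q) : ℝ) := by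
        exact_mod_cast Nat.factorial_pos _
      rw [div_le_iff₀ hfac] at h3
      calc y ^ (Nat.ceil q) ≤ Real.exp y * (Nat.factorial (Nat.ceil q) : ℝ) := h3
        _ ≤ C * Real.exp y := by rw [hC]; nlinarith [Real.exp_pos y]
  rw [Real.rpow_neg hy.le, Real.exp_neg, inv_eq_one_div, inv_eq_one_div, mul_one_div,
    div_le_div_iff₀ (Real.exp_pos y) (Real.rpow_pos_of_pos hy q), one_mul]
  linarith


lemma continuous_tanh' : Continuous Real.tanh := by
  have h : Real.tanh = fun x => Real.sinh x / Real.cosh x :=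
    funext fun x => Real.tanh_eq_sinh_div_cosh x
  rw [h]
  exact Real.continuous_sinh.div Real.continuous_cosh fun x => (Real.cosh_pos x).ne'

set_option maxHeartbeats 1600000 in
theorem smoothing_bias_bound {Ω : Type*} [MeasurableSpace Ω]
    (μ : Measure Ω) [IsProbabilityMeasure μ]
    (U : Ω → ℝ) (hUm : Measurable U) (hU0 : ∀ ω, 0 ≤ U ω)
    (hUb : ∃ M : ℝ, ∀ ω, U ω ≤ M)
    (p δ H c : ℝ) (hp1 : 1 ≤ p) (hp2 : p < 2)
    (hδ : 0 < δ) (hH : 0 < H) (hc : 0 < c)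
    (f : ℝ → ℝ) (hfm : Measurable f) (hf0 : ∀ t ∈ Set.Ioo (0 : ℝ) c, 0 ≤ f t)
    (hdens : ∀ s : Set ℝ, MeasurableSet s → s ⊆ Set.Ioo (0 : ℝ) c →
      (μ.map U) s = ∫⁻ t in s, ENNReal.ofReal (f t))
    (hfb : ∀ t ∈ Set.Ioo (0 : ℝ) c, f t ≤ H * t ^ (δ - 1)) :
    ∃ K : ℝ, 0 < K ∧ ∃ β₀ : ℝ, 0 < β₀ ∧ ∀ β : ℝ, β₀ ≤ β →
      ∫ ω, (U ω) ^ p * (1 - Real.tanh (β * (U ω) ^ (2 - p))) ∂μ ≤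
        K * β ^ (-(p + δ) / (2 - p)) := by
  obtain ⟨M₀, hM₀⟩ := hUb
  set M : ℝ := max M₀ 1 with hMdef
  have hM : ∀ ω, U ω ≤ M := fun ω => (hM₀ ω).trans (le_max_left _ _)
  have hM1 : (1:ℝ) ≤ M := le_max_right _ _
  have h2p : 0 < 2 - p := by linarith
  have hpδ : 0 < p + δ := by linarith
  set r : ℝ := (p + δ) / (2 - p) with hr
  set q : ℝ := (p + δ + 1) / (2 - p) with hq
  have hr0 : 0 < r := div_pos hpδ h2p
  have hq0 : 0 < q := div_pos (by linarith) h2p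
  set Cq : ℝ := ((Nat.factorial (Nat.ceil q) : ℝ) + 1) with hCqdef
  set Cr : ℝ := ((Nat.factorial (Nat.ceil r) : ℝ) + 1) with hCrdef
  have hCq : 0 < Cq := by positivity
  have hCr : 0 < Cr := by positivity
  have hqe : (2 - p) * q = p + δ + 1 := by
    rw [hq]; field_simp
  set K : ℝ := 2*H/(p+δ) + 2*H*Cq*(2:ℝ)^(-q) + 2*M^p*Cr*(2*c^(2-p))^(-r) with hKdef
  have hK1 : 0 < 2*H/(p+δ) := div_pos (by linarith) hpδ
  have hK2 : (0:ℝ) ≤ 2*H*Cq*(2:ℝ)^(-q) := by positivity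
  have hK3 : (0:ℝ) ≤ 2*M^p*Cr*(2*c^(2-p))^(-r) := by positivity
  refine ⟨K, by rw [hKdef]; linarith, 1, one_pos, fun β hβ => ?_⟩
  have hβ0 : (0:ℝ) < β := lt_of_lt_of_le one_pos hβ
  set g : ℝ → ℝ := fun t => t ^ p * (1 - Real.tanh (β * t ^ (2 - p))) with hgdef
  have hgm : Measurable g := by
    apply Measurable.mul
    · exact (Real.continuous_rpow_const (by linarith)).measurable
    · exact measurable_const.sub
        (continuous_tanh'.measurable.comp
          (measurable_const.mul (Real.continuous_rpow_const h2p.le).measurable))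
  have hg0 : ∀ t : ℝ, 0 ≤ t → 0 ≤ g t := fun t ht =>
    mul_nonneg (Real.rpow_nonneg ht p) (one_sub_tanh_nonneg _)
  set F : ℝ → ℝ≥0∞ := fun t => ENNReal.ofReal (g t) with hFdef
  have hFm : Measurable F := hgm.ennreal_ofReal
  set t₀ : ℝ := β ^ (-(2-p)⁻¹) with ht₀def
  have ht₀ : 0 < t₀ := Real.rpow_pos_of_pos hβ0 _
  set B : ℝ := 2*H*Cq*(2*β)^(-q) with hBdef
  have hB0 : 0 ≤ B := by positivity
  set ν : Measure ℝ := μ.map U with hν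
  have hνprob : IsProbabilityMeasure ν := Measure.isProbabilityMeasure_map hUm.aemeasurable
  set D : ℝ := 2*M^p*Cr*(2*(β*c^(2-p)))^(-r) with hDdef
  have hD0 : 0 ≤ D := by positivity
  have heq : ∫ ω, (U ω) ^ p * (1 - Real.tanh (β * (U ω) ^ (2 - p))) ∂μ
      = (∫⁻ ω, F (U ω) ∂μ).toReal :=
    integral_eq_lintegral_of_nonneg_ae
      (Filter.Eventually.of_forall fun ω => hg0 _ (hU0 ω))
      ((hgm.comp hUm).aestronglyMeasurable)
  rw [heq]
  have hKβ : (0:ℝ) ≤ K * β ^ (-(p + δ) / (2 - p)) := by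
    apply mul_nonneg _ (Real.rpow_nonneg hβ0.le _)
    rw [hKdef]; linarith
  refine ENNReal.toReal_le_of_le_ofReal hKβ ?_
  have hmap : ∫⁻ ω, F (U ω) ∂μ = ∫⁻ t, F t ∂ν := (lintegral_map hFm hUm).symm
  rw [hmap, ← lintegral_add_compl F (measurableSet_Ioo (a := (0:ℝ)) (b := c))]
  -- Part 2 : the complement
  have hae : ∀ᵐ t ∂ν, t ∈ Icc 0 M :=
    (ae_map_iff hUm.aemeasurable measurableSet_Icc).2
      (Filter.Eventually.of_forall fun ω => ⟨hU0 ω, hM ω⟩)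
  have hcompl : ∫⁻ t in (Ioo (0:ℝ) c)ᶜ, F t ∂ν ≤ ENNReal.ofReal D := by
    have hb : ∀ᵐ t ∂(ν.restrict (Ioo (0:ℝ) c)ᶜ), F t ≤ ENNReal.ofReal D := by
      filter_upwards [ae_restrict_of_ae hae,
        ae_restrict_mem measurableSet_Ioo.compl] with t ht hmem
      apply ENNReal.ofReal_le_ofReal
      rcases eq_or_lt_of_le ht.1 with h0 | h0
      · have hgz : g t = 0 := by
          rw [hgdef]; simp only [← h0]
          rw [Real.zero_rpow (by linarith : p ≠ 0)]; ring
        rw [hgz]; exact hD0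
      · have hct : c ≤ t := by
          by_contra hcon
          exact hmem ⟨h0, lt_of_not_ge hcon⟩
        have htM : t ≤ M := ht.2
        have h1 : t ^ p ≤ M ^ p := Real.rpow_le_rpow h0.le htM (by linarith)
        have h2 : 1 - Real.tanh (β * t ^ (2-p)) ≤ 2 * Real.exp (-(2*(β*c^(2-p)))) := by
          refine (one_sub_tanh_le _).trans ?_
          have ha : c ^ (2-p) ≤ t ^ (2-p) := Real.rpow_le_rpow hc.le hct h2p.le
          have hb' : β * c ^ (2-p) ≤ β * t ^ (2-p) :=
            mul_le_mul_of_nonneg_left ha hβ0.le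
          have := Real.exp_le_exp.2 (by linarith : -(2*(β * t ^ (2-p))) ≤ -(2*(β*c^(2-p))))
          linarith
        have h3 : Real.exp (-(2*(β*c^(2-p)))) ≤ Cr * (2*(β*c^(2-p))) ^ (-r) :=
          exp_neg_le r hr0.le (by positivity)
        have hgt : g t ≤ M ^ p * (2 * (Cr * (2*(β*c^(2-p))) ^ (-r))) := by
          rw [hgdef]
          refine mul_le_mul h1 (h2.trans (by nlinarith)) (one_sub_tanh_nonneg _) ?_
          positivity
        refine hgt.trans_eq ?_
        rw [hDdef]; ring
    calc ∫⁻ t in (Ioo (0:ℝ) c)ᶜ, F t ∂ν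
        ≤ ∫⁻ _ in (Ioo (0:ℝ) c)ᶜ, ENNReal.ofReal D ∂ν := lintegral_mono_ae hb
      _ = ENNReal.ofReal D * ν (Ioo (0:ℝ) c)ᶜ := by rw [setLIntegral_const]
      _ ≤ ENNReal.ofReal D * 1 := mul_le_mul_right prob_le_one _
      _ = ENNReal.ofReal D := mul_one _
  -- Part 1 : on (0,c), use the density
  have hrestr : ν.restrict (Ioo 0 c)
      = (volume.withDensity (fun t => ENNReal.ofReal (f t))).restrict (Ioo 0 c) := by
    ext s hs
    rw [Measure.restrict_apply hs, Measure.restrict_apply hs,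
      hdens _ (hs.inter measurableSet_Ioo) inter_subset_right,
      withDensity_apply _ (hs.inter measurableSet_Ioo)]
  have hpart1 : ∫⁻ t in Ioo (0:ℝ) c, F t ∂ν
      ≤ (∫⁻ t in Ioc (0:ℝ) t₀, ENNReal.ofReal (2*H*t^(p+δ-1)))
        + ∫⁻ t in Ioi t₀, ENNReal.ofReal (B * t^(-2:ℝ)) := by
    rw [hrestr, restrict_withDensity measurableSet_Ioo,
      lintegral_withDensity_eq_lintegral_mul _ hfm.ennreal_ofReal hFm]
    rw [← lintegral_indicator measurableSet_Ioo, ← lintegral_indicator measurableSet_Ioc,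
      ← lintegral_indicator measurableSet_Ioi, ← lintegral_add_left]
    swap
    · exact (((continuous_const.mul
        (Real.continuous_rpow_const (by linarith : (0:ℝ) ≤ p+δ-1))).measurable).ennreal_ofReal).indicator
        measurableSet_Ioc
    apply lintegral_mono
    intro t
    by_cases hmem : t ∈ Ioo (0:ℝ) c
    · have ht0 : 0 < t := hmem.1
      have htc : t < c := hmem.2
      rw [Set.indicator_of_mem (s := Ioo (0:ℝ) c) hmem]
      simp only [Pi.mul_apply]
      have hfF : ENNReal.ofReal (f t) * F t = ENNReal.ofReal (f t * g t) :=
        (ENNReal.ofReal_mul (hf0 t ⟨ht0, htc⟩)).symm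
      rcases le_or_gt t t₀ with hle | hlt
      · have hreal : f t * g t ≤ 2*H*t^(p+δ-1) := by
          have hgle : g t ≤ t ^ p * 2 :=
            mul_le_mul_of_nonneg_left (one_sub_tanh_le_two _) (Real.rpow_nonneg ht0.le p)
          calc f t * g t ≤ (H * t^(δ-1)) * (t ^ p * 2) :=
                mul_le_mul (hfb t ⟨ht0, htc⟩) hgle (hg0 t ht0.le) (by positivity)
            _ = 2*H*(t^(δ-1) * t^p) := by ring
            _ = 2*H*t^(p+δ-1) := by rw [← Real.rpow_add ht0]; ring_nf
        calc ENNReal.ofReal (f t) * F t = ENNReal.ofReal (f t * g t) := hfF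
          _ ≤ (Ioc (0:ℝ) t₀).indicator (fun t => ENNReal.ofReal (2*H*t^(p+δ-1))) t := by
              rw [Set.indicator_of_mem (s := Ioc (0:ℝ) t₀) (a := t) ⟨ht0, hle⟩]
              exact ENNReal.ofReal_le_ofReal hreal
          _ ≤ _ := le_self_add
      · have hy : (0:ℝ) < 2*(β * t^(2-p)) := by positivity
        have h3 : (2*(β * t^(2-p))) ^ (-q) = (2*β)^(-q) * t^(-(p+δ+1)) := by
          rw [show 2*(β*t^(2-p)) = (2*β)*t^(2-p) by ring,
            Real.mul_rpow (by positivity) (by positivity)]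
          congr 1
          rw [← Real.rpow_mul ht0.le, mul_neg, hqe]
        have e1 : 1 - Real.tanh (β * t^(2-p)) ≤ 2*Cq*(2*β)^(-q) * t^(-(p+δ+1)) := by
          calc 1 - Real.tanh (β * t^(2-p)) ≤ 2 * Real.exp (-(2*(β*t^(2-p)))) :=
                one_sub_tanh_le _
            _ ≤ 2 * (Cq * (2*(β*t^(2-p)))^(-q)) :=
                mul_le_mul_of_nonneg_left (exp_neg_le q hq0.le hy) (by norm_num)
            _ = 2*Cq*(2*β)^(-q) * t^(-(p+δ+1)) := by rw [h3]; ring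
        have hreal : f t * g t ≤ B * t^(-2:ℝ) := by
          calc f t * g t
              ≤ (H * t^(δ-1)) * (t ^ p * (2*Cq*(2*β)^(-q) * t^(-(p+δ+1)))) :=
                mul_le_mul (hfb t ⟨ht0, htc⟩)
                  (mul_le_mul_of_nonneg_left e1 (Real.rpow_nonneg ht0.le p))
                  (hg0 t ht0.le) (by positivity)
            _ = B * (t^(δ-1) * t^p * t^(-(p+δ+1))) := by rw [hBdef]; ring
            _ = B * t^(-2:ℝ) := by
                rw [← Real.rpow_add ht0, ← Real.rpow_add ht0]; ring_nf
        calc ENNReal.ofReal (f t) * F t = ENNReal.ofReal (f t * g t) := hfF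
          _ ≤ (Ioi t₀).indicator (fun t => ENNReal.ofReal (B * t^(-2:ℝ))) t := by
              rw [Set.indicator_of_mem (s := Ioi t₀) (a := t) hlt]
              exact ENNReal.ofReal_le_ofReal hreal
          _ ≤ _ := le_add_self
    · rw [Set.indicator_of_notMem hmem]
      exact zero_le
  -- evaluate the two integrals
  have hI1 : ∫⁻ t in Ioc (0:ℝ) t₀, ENNReal.ofReal (2*H*t^(p+δ-1))
      = ENNReal.ofReal (2*H*(t₀^(p+δ)/(p+δ))) := by
    have hint : IntegrableOn (fun t : ℝ => 2*H*t^(p+δ-1)) (Ioc 0 t₀) volume := by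
      have h1 : IntervalIntegrable (fun t : ℝ => t^(p+δ-1)) volume 0 t₀ :=
        intervalIntegral.intervalIntegrable_rpow' (by linarith)
      have h2 := h1.const_mul (2*H)
      rwa [intervalIntegrable_iff_integrableOn_Ioc_of_le ht₀.le] at h2
    have hnn : 0 ≤ᵐ[volume.restrict (Ioc (0:ℝ) t₀)] fun t : ℝ => 2*H*t^(p+δ-1) := by
      filter_upwards [ae_restrict_mem measurableSet_Ioc] with t ht
      exact mul_nonneg (by linarith) (Real.rpow_nonneg ht.1.le (p+δ-1))
    rw [← ofReal_integral_eq_lintegral_ofReal hint hnn]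
    congr 1
    rw [← intervalIntegral.integral_of_le ht₀.le, intervalIntegral.integral_const_mul,
      integral_rpow (Or.inl (by linarith : (-1:ℝ) < p+δ-1)),
      show p+δ-1+1 = p+δ by ring, Real.zero_rpow hpδ.ne']
    ring
  have hI2 : ∫⁻ t in Ioi t₀, ENNReal.ofReal (B * t^(-2:ℝ))
      = ENNReal.ofReal (B * t₀^(-1:ℝ)) := by
    have hint : IntegrableOn (fun t : ℝ => B * t^(-2:ℝ)) (Ioi t₀) volume :=
      (integrableOn_Ioi_rpow_of_lt (by norm_num) ht₀).const_mul B
    have hnn : 0 ≤ᵐ[volume.restrict (Ioi t₀)] fun t : ℝ => B * t^(-2:ℝ) := by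
      filter_upwards [ae_restrict_mem measurableSet_Ioi] with t ht
      exact mul_nonneg hB0 (Real.rpow_nonneg (ht₀.trans ht).le (-2:ℝ))
    rw [← ofReal_integral_eq_lintegral_ofReal hint hnn]
    congr 1
    rw [integral_const_mul, integral_Ioi_rpow_of_lt (by norm_num) ht₀]
    norm_num
  -- final assembly
  have hE : β ^ (-(p + δ) / (2 - p)) = β ^ (-r) := by
    congr 1; rw [hr, neg_div]
  have e1 : t₀^(p+δ) = β^(-r) := by
    rw [ht₀def, ← Real.rpow_mul hβ0.le]
    congr 1
    rw [hr, div_eq_mul_inv]; ring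
  have e2 : t₀^(-1:ℝ) = β^((2-p)⁻¹) := by
    rw [ht₀def, ← Real.rpow_mul hβ0.le]
    norm_num
  have e3 : ((2*β):ℝ)^(-q) = 2^(-q) * β^(-q) := Real.mul_rpow (by norm_num) hβ0.le
  have e4 : β^(-q) * β^((2-p)⁻¹) = β^(-r) := by
    rw [← Real.rpow_add hβ0]
    congr 1
    rw [hq, hr]
    field_simp
    ring
  have e5 : (2*(β*c^(2-p)))^(-r) = (2*c^(2-p))^(-r) * β^(-r) := by
    rw [show 2*(β*c^(2-p)) = (2*c^(2-p))*β by ring,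
      Real.mul_rpow (by positivity) hβ0.le]
  have ha : (0:ℝ) ≤ 2*H*(t₀^(p+δ)/(p+δ)) :=
    mul_nonneg (by linarith) (div_nonneg (Real.rpow_nonneg ht₀.le _) hpδ.le)
  have hbnn : (0:ℝ) ≤ B * t₀^(-1:ℝ) := mul_nonneg hB0 (Real.rpow_nonneg ht₀.le _)
  refine le_trans (add_le_add hpart1 hcompl) ?_
  rw [hI1, hI2, ← ENNReal.ofReal_add ha hbnn, ← ENNReal.ofReal_add (add_nonneg ha hbnn) hD0]
  apply ENNReal.ofReal_le_ofReal
  rw [hE]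
  apply le_of_eq
  calc 2*H*(t₀^(p+δ)/(p+δ)) + B*t₀^(-1:ℝ) + D
      = 2*H/(p+δ)*β^(-r) + 2*H*Cq*(2^(-q)*(β^(-q)*β^((2-p)⁻¹)))
        + 2*M^p*Cr*((2*c^(2-p))^(-r)*β^(-r)) := by
        rw [e1, e2, hBdef, e3, hDdef, e5]; ring
    _ = K * β^(-r) := by rw [e4, hKdef]; ring
end
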